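/- arXiv:1101.2731 — 3 statements merged into one kernel-verified Lean document; each statement's English description precedes it below -/
import Mathlib

section
/- Let n ≥ 2 and let i satisfy 1 ≤ i ≤ n−1. Then the simple centralizer of the generator x_i in SB_n is exactly the set of simple braids not divisible by the neighbouring generators: C_n(x_i) = {β ∈ SB_n : for every j ≥ 1 with |j − i| = 1, x_j does not divide β}. -/
/-- The defining relations of the positive braid monoid `MB_∞` on generators
`x i`, `i : ℕ+`: the braid relations and the far-commutation relations. -/
def BraidRel : FreeMonoid ℕ+ → FreeMonoid ℕ+ → Prop := fun a b =>
  (∃ i : ℕ+, a = FreeMonoid.of (i + 1) * FreeMonoid.of i * FreeMonoid.of (i + 1) ∧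
      b = FreeMonoid.of i * FreeMonoid.of (i + 1) * FreeMonoid.of i) ∨
  (∃ i j : ℕ+, i + 2 ≤ j ∧ a = FreeMonoid.of i * FreeMonoid.of j ∧
      b = FreeMonoid.of j * FreeMonoid.of i)

/-- The congruence generated by the braid relations. -/
def braidCon : Con (FreeMonoid ℕ+) := conGen BraidRel

/-- The positive braid monoid `MB_∞`. -/
abbrev MB : Type := braidCon.Quotient

/-- The generator `x_i` of `MB_∞`, for `i : ℕ+`. -/
def braidGen (i : ℕ+) : MB := braidCon.mk' (FreeMonoid.of i)

/-- The generator `x_i` of `MB_∞`, indexed by a natural number `i ≥ 1`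
(junk value `x_1` for `i = 0`). -/
def X (i : ℕ) : MB := braidGen ⟨max i 1, lt_of_lt_of_le one_pos (le_max_right i 1)⟩

/-- `x_i` divides `β`: `β = δ * x_i * ε` for some `δ ε ∈ MB_∞`. -/
def GenDvd (i : ℕ) (β : MB) : Prop := ∃ δ ε : MB, β = δ * X i * ε

/-- `x_i` left-divides `β`: `β = x_i * ε` for some `ε ∈ MB_∞`. -/
def GenDvdL (i : ℕ) (β : MB) : Prop := ∃ ε : MB, β = X i * ε

/-- `x_i` right-divides `β`: `β = δ * x_i` for some `δ ∈ MB_∞`. -/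
def GenDvdR (i : ℕ) (β : MB) : Prop := ∃ δ : MB, β = δ * X i

/-- The set `SB_n` of simple braids in `MB_n`: products of words in the
generators `x_1, …, x_{n-1}` in which each generator appears at most once. -/
def SB (n : ℕ) : Set MB :=
  {β | ∃ w : List ℕ, w.Nodup ∧ (∀ i ∈ w, 1 ≤ i ∧ i < n) ∧ β = (w.map X).prod}

/-- The simple centralizer `C_n(β)` of `β` in `SB_n`. -/
def C (n : ℕ) (β : MB) : Set MB := {γ ∈ SB n | β * γ = γ * β}

/-- `c_n(β)`, the cardinality of the simple centralizer `C_n(β)`. -/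
noncomputable def c (n : ℕ) (β : MB) : ℕ := (C n β).ncard

open Equiv in
/-- The adjacent transposition `(k, k+1)` as a permutation of `ℕ`. -/
def sw (k : ℕ) : Equiv.Perm ℕ := Equiv.swap k (k + 1)

lemma sw_apply (k p : ℕ) : sw k p = if p = k then k + 1 else if p = k + 1 then k else p := by
  simp [sw, Equiv.swap_apply_def]

lemma sw_braid (a : ℕ) : sw (a + 1) * sw a * sw (a + 1) = sw a * sw (a + 1) * sw a := by
  ext p
  simp only [Equiv.Perm.mul_apply, sw_apply]
  split_ifs <;> omega

lemma sw_comm (a b : ℕ) (h : a + 2 ≤ b) : sw a * sw b = sw b * sw a := by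
  ext p
  simp only [Equiv.Perm.mul_apply, sw_apply]
  split_ifs <;> omega

/-- The permutation representation on the free monoid. -/
def permF : FreeMonoid ℕ+ →* Equiv.Perm ℕ := FreeMonoid.lift fun i : ℕ+ => sw (i : ℕ)

lemma permF_rel : braidCon ≤ Con.ker permF := by
  refine Con.conGen_le.mpr ?_
  rintro a b (⟨i, rfl, rfl⟩ | ⟨i, j, hij, rfl, rfl⟩) <;> rw [Con.ker_rel] <;>
    simp only [map_mul, permF, FreeMonoid.lift_eval_of]
  · have : ((i + 1 : ℕ+) : ℕ) = (i : ℕ) + 1 := by push_cast; ring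
    rw [this]
    exact sw_braid (i : ℕ)
  · refine sw_comm _ _ ?_
    have := (PNat.coe_le_coe _ _).mpr hij
    push_cast at this
    omega

/-- The permutation representation of `MB`. -/
def permHom : MB →* Equiv.Perm ℕ := Con.lift _ permF permF_rel

/-- Detects whether the generator `x_j` occurs in a word: maps `x_j ↦ 0` and all
other generators to `1`, multiplicatively into `ℕ`. -/
def suppF (j : ℕ) : FreeMonoid ℕ+ →* ℕ :=
  FreeMonoid.lift fun k : ℕ+ => if (k : ℕ) = j then 0 else 1

lemma suppF_rel (j : ℕ) : braidCon ≤ Con.ker (suppF j) := by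
  refine Con.conGen_le.mpr ?_
  rintro a b (⟨i, rfl, rfl⟩ | ⟨i, k, hik, rfl, rfl⟩) <;> rw [Con.ker_rel] <;>
    simp only [map_mul, suppF, FreeMonoid.lift_eval_of] <;> split_ifs <;> simp
/-- Supp homomorphism on `MB`. -/
def suppHom (j : ℕ) : MB →* ℕ := Con.lift _ (suppF j) (suppF_rel j)

lemma X_eq (i : ℕ) (h : 1 ≤ i) : X i = braidCon.mk' (FreeMonoid.of ⟨i, h⟩) := by
  have : (⟨max i 1, lt_of_lt_of_le one_pos (le_max_right i 1)⟩ : ℕ+) = ⟨i, h⟩ :=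
    Subtype.ext (max_eq_left h)
  rw [X]
  exact congrArg (fun k => braidCon.mk' (FreeMonoid.of k)) this

lemma permHom_X (i : ℕ) (h : 1 ≤ i) : permHom (X i) = sw i := by
  rw [X_eq i h, permHom, Con.lift_mk']
  exact FreeMonoid.lift_eval_of _ _

lemma suppHom_X (j i : ℕ) (h : 1 ≤ i) : suppHom j (X i) = if i = j then 0 else 1 := by
  rw [X_eq i h, suppHom, Con.lift_mk']
  exact FreeMonoid.lift_eval_of _ _

lemma braid_comm_rel (i k : ℕ+) (h : i + 2 ≤ k) :
    braidGen i * braidGen k = braidGen k * braidGen i := by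
  rw [braidGen, braidGen, ← map_mul, ← map_mul]
  have : braidCon (FreeMonoid.of i * FreeMonoid.of k) (FreeMonoid.of k * FreeMonoid.of i) :=
    ConGen.Rel.of _ _ (Or.inr ⟨i, k, h, rfl, rfl⟩)
  exact Con.eq _ |>.mpr this

lemma X_comm (i k : ℕ) (hi : 1 ≤ i) (hk : 1 ≤ k) (h : k = i ∨ i + 2 ≤ k ∨ k + 2 ≤ i) :
    X i * X k = X k * X i := by
  rcases h with rfl | h | h
  · rfl
  · rw [X_eq i hi, X_eq k hk]
    exact braid_comm_rel ⟨i, hi⟩ ⟨k, hk⟩ ((PNat.coe_le_coe _ _).mp (by show i + 2 ≤ k; omega))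
  · rw [X_eq i hi, X_eq k hk]
    exact (braid_comm_rel ⟨k, hk⟩ ⟨i, hi⟩ ((PNat.coe_le_coe _ _).mp (by show k + 2 ≤ i; omega))).symm
/-- Product of adjacent swaps along a word. -/
def sprod (w : List ℕ) : Equiv.Perm ℕ := (w.map sw).prod

lemma sprod_nil : sprod [] = 1 := rfl

lemma sprod_cons (k : ℕ) (w : List ℕ) : sprod (k :: w) = sw k * sprod w := by
  simp [sprod]

lemma sprod_le (w : List ℕ) (m : ℕ) (hw : ∀ k ∈ w, k ≠ m) :
    ∀ p, p ≤ m → sprod w p ≤ m := by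
  induction w with
  | nil => intro p hp; simpa [sprod_nil] using hp
  | cons k t ih =>
    intro p hp
    rw [sprod_cons, Equiv.Perm.mul_apply]
    have h1 : sprod t p ≤ m := ih (fun x hx => hw x (List.mem_cons_of_mem _ hx)) p hp
    have hk : k ≠ m := hw k (List.mem_cons_self)
    rw [sw_apply]
    split_ifs <;> omega

lemma sprod_ge (w : List ℕ) (m : ℕ) (hw : ∀ k ∈ w, k ≠ m) :
    ∀ p, m + 1 ≤ p → m + 1 ≤ sprod w p := by
  induction w with
  | nil => intro p hp; simpa [sprod_nil] using hp
  | cons k t ih =>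
    intro p hp
    rw [sprod_cons, Equiv.Perm.mul_apply]
    have h1 : m + 1 ≤ sprod t p := ih (fun x hx => hw x (List.mem_cons_of_mem _ hx)) p hp
    have hk : k ≠ m := hw k (List.mem_cons_self)
    rw [sw_apply]
    split_ifs <;> omega

lemma key : ∀ w : List ℕ, w.Nodup → ∀ i j : ℕ, j ∈ w → (j = i + 1 ∨ j + 1 = i) →
    ¬ ((sprod w i = i ∧ sprod w (i + 1) = i + 1) ∨
        (sprod w i = i + 1 ∧ sprod w (i + 1) = i)) := by
  intro w
  induction w with
  | nil => intro _ i j hj; exact absurd hj List.not_mem_nil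
  | cons k t ih =>
    intro hw i j hj hnb hSP
    have hkt : k ∉ t := (List.nodup_cons.mp hw).1
    have ht : t.Nodup := (List.nodup_cons.mp hw).2
    rw [sprod_cons] at hSP
    simp only [Equiv.Perm.mul_apply, sw_apply] at hSP
    by_cases hA : k = i + 1
    · have hne : ∀ x ∈ t, x ≠ i + 1 := fun x hx e => hkt (by rw [hA, ← e]; exact hx)
      have h1 : sprod t i ≤ i + 1 := sprod_le t (i + 1) hne i (by omega)
      have h2 : sprod t (i + 1) ≤ i + 1 := sprod_le t (i + 1) hne (i + 1) le_rfl
      split_ifs at hSP <;> omega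
    · by_cases hB : k + 1 = i
      · have hne : ∀ x ∈ t, x ≠ k := fun x hx e => hkt (e ▸ hx)
        have h1 : k + 1 ≤ sprod t i := sprod_ge t k hne i (by omega)
        have h2 : k + 1 ≤ sprod t (i + 1) := sprod_ge t k hne (i + 1) (by omega)
        split_ifs at hSP <;> omega
      · have hjt : j ∈ t := by
          rcases List.mem_cons.mp hj with rfl | h
          · exfalso; omega
          · exact h
        exact ih ht i j hjt hnb (by split_ifs at hSP <;> omega)

lemma permHom_prod (w : List ℕ) (hw : ∀ k ∈ w, 1 ≤ k) :
    permHom ((w.map X).prod) = sprod w := by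
  induction w with
  | nil => simp [sprod_nil]
  | cons k t ih =>
    simp only [List.map_cons, List.prod_cons, map_mul, sprod_cons]
    rw [permHom_X k (hw k (List.mem_cons_self)),
      ih fun x hx => hw x (List.mem_cons_of_mem _ hx)]

lemma suppHom_prod_of_not_mem (j : ℕ) (w : List ℕ) (hw : ∀ k ∈ w, 1 ≤ k) (hj : j ∉ w) :
    suppHom j ((w.map X).prod) = 1 := by
  induction w with
  | nil => simp
  | cons k t ih =>
    simp only [List.map_cons, List.prod_cons, map_mul]
    rw [suppHom_X j k (hw k (List.mem_cons_self)),
      ih (fun x hx => hw x (List.mem_cons_of_mem _ hx)) (fun h => hj (List.mem_cons_of_mem _ h)),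
      if_neg (fun e : k = j => hj (e ▸ List.mem_cons_self)), mul_one]

lemma genDvd_of_mem (j : ℕ) (w : List ℕ) (hj : j ∈ w) : GenDvd j ((w.map X).prod) := by
  obtain ⟨s, t, rfl⟩ := List.append_of_mem hj
  exact ⟨(s.map X).prod, (t.map X).prod, by simp [List.prod_append, mul_assoc]⟩

lemma suppHom_eq_zero_of_genDvd (j : ℕ) (hj : 1 ≤ j) (β : MB) (h : GenDvd j β) :
    suppHom j β = 0 := by
  obtain ⟨δ, ε, rfl⟩ := h
  simp [map_mul, suppHom_X j j hj]

lemma X_comm_prod (i : ℕ) (w : List ℕ) (h : ∀ k ∈ w, X i * X k = X k * X i) :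
    X i * (w.map X).prod = (w.map X).prod * X i := by
  induction w with
  | nil => simp
  | cons k t ih =>
    simp only [List.map_cons, List.prod_cons]
    rw [← mul_assoc, h k (List.mem_cons_self), mul_assoc,
      ih fun x hx => h x (List.mem_cons_of_mem _ hx), ← mul_assoc]
/-- Theorem 1.2: for `1 ≤ i ≤ n-1`, the simple centralizer of the generator
`x_i` in `SB_n` consists exactly of the simple braids not divisible by the
neighbouring generators `x_j`, `|j - i| = 1`. -/
theorem simple_centralizer_of_generator (n : ℕ) (hn : 2 ≤ n) (i : ℕ) (hi1 : 1 ≤ i)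
    (hi2 : i ≤ n - 1) :
    C n (X i) =
      {β ∈ SB n | ∀ j : ℕ, 1 ≤ j → (j = i + 1 ∨ i = j + 1) → ¬ GenDvd j β} := by
  ext β
  constructor
  · rintro ⟨hSB, hcomm⟩
    obtain ⟨w, hnd, hbd, rfl⟩ := hSB
    refine ⟨⟨w, hnd, hbd, rfl⟩, ?_⟩
    intro j hj hnb hdvd
    have h0 : suppHom j ((w.map X).prod) = 0 := suppHom_eq_zero_of_genDvd j hj _ hdvd
    have hjw : j ∈ w := by
      by_contra hjw
      rw [suppHom_prod_of_not_mem j w (fun k hk => (hbd k hk).1) hjw] at h0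
      exact one_ne_zero h0
    have hperm : sw i * sprod w = sprod w * sw i := by
      have := congrArg permHom hcomm
      rwa [map_mul, map_mul, permHom_X i hi1,
        permHom_prod w (fun k hk => (hbd k hk).1)] at this
    set σ := sprod w with hσ
    have e1 : sw i (σ i) = σ (i + 1) := by
      have : (sw i * σ) i = (σ * sw i) i := by rw [hperm]
      simp only [Equiv.Perm.mul_apply] at this
      rw [this]
      congr 1
      rw [sw_apply]; simp
    have hSP : (σ i = i ∧ σ (i + 1) = i + 1) ∨ (σ i = i + 1 ∧ σ (i + 1) = i) := by
      by_cases h1 : σ i = i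
      · left
        refine ⟨h1, ?_⟩
        rw [← e1, h1, sw_apply]; simp
      · by_cases h2 : σ i = i + 1
        · right
          refine ⟨h2, ?_⟩
          rw [← e1, h2, sw_apply]
          split_ifs <;> omega
        · exfalso
          have : sw i (σ i) = σ i := by
            rw [sw_apply, if_neg h1, if_neg h2]
          rw [this] at e1
          exact (by omega : i ≠ i + 1) (σ.injective e1)
    exact key w hnd i j hjw (by omega) hSP
  · rintro ⟨hSB, hno⟩
    obtain ⟨w, hnd, hbd, rfl⟩ := hSB
    refine ⟨⟨w, hnd, hbd, rfl⟩, ?_⟩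
    apply X_comm_prod
    intro k hk
    have hk1 := (hbd k hk).1
    apply X_comm i k hi1 hk1
    by_contra hcase
    push_neg at hcase
    have hnb : k = i + 1 ∨ i = k + 1 := by omega
    exact hno k hk1 hnb (genDvd_of_mem k w hk)
end

section
/- Let n ≥ 2, let β ∈ SB_n with x_{n−1} | β, and let m ≥ 1. Define E_n = {α ∈ SB_{n+m} : x_j does not divide α for all j with 1 ≤ j ≤ n}. Then for γ ∈ SB_{n+m}, one has γ ∈ C_{n+m}(β) if and only if γ = γ₁ γ₂ for some γ₁ ∈ C_n(β) and some γ₂ ∈ E_n. -/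
lemma braid_rel_mb (i : ℕ+) :
    braidGen (i+1) * braidGen i * braidGen (i+1) = braidGen i * braidGen (i+1) * braidGen i := by
  simp only [braidGen, ← map_mul]
  exact (Con.eq _).mpr (ConGen.Rel.of _ _ (Or.inl ⟨i, rfl, rfl⟩))

lemma comm_rel_mb {i j : ℕ+} (h : i + 2 ≤ j) :
    braidGen i * braidGen j = braidGen j * braidGen i := by
  simp only [braidGen, ← map_mul]
  exact (Con.eq _).mpr (ConGen.Rel.of _ _ (Or.inr ⟨i, j, h, rfl, rfl⟩))

def mbLift {M : Type*} [Monoid M] (f : ℕ+ → M)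
    (hbraid : ∀ i : ℕ+, f (i+1) * f i * f (i+1) = f i * f (i+1) * f i)
    (hcomm : ∀ i j : ℕ+, i + 2 ≤ j → f i * f j = f j * f i) : MB →* M :=
  Con.lift _ (FreeMonoid.lift f) (show braidCon ≤ _ from Con.conGen_le.mpr (fun a b h => by
    rcases h with ⟨i, rfl, rfl⟩ | ⟨i, j, hij, rfl, rfl⟩
    · simp [Con.ker_rel, map_mul, hbraid]
    · simp [Con.ker_rel, map_mul, hcomm _ _ hij]))

@[simp] lemma mbLift_gen {M : Type*} [Monoid M] (f : ℕ+ → M) (h1) (h2) (i : ℕ+) :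
    mbLift f h1 h2 (braidGen i) = f i := by
  show Con.lift _ _ _ (braidCon.mk' _) = _
  rw [Con.lift_mk']
  simp

@[simp] lemma mbLift_gen' {M : Type*} [Monoid M] (f : ℕ+ → M) (h1) (h2) (i : ℕ) (hi : 0 < i) :
    mbLift f h1 h2 (braidGen ⟨i, hi⟩) = f ⟨i, hi⟩ :=
  mbLift_gen f h1 h2 ⟨i, hi⟩

lemma swap_braid (a : ℕ) :
    Equiv.swap (a+1) (a+2) * Equiv.swap a (a+1) * Equiv.swap (a+1) (a+2)
      = Equiv.swap a (a+1) * Equiv.swap (a+1) (a+2) * Equiv.swap a (a+1) := by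
  ext x
  simp only [Equiv.Perm.mul_apply, Equiv.swap_apply_def]
  split_ifs <;> omega

lemma swap_comm' (a b : ℕ) (h : a + 2 ≤ b) :
    Equiv.swap a (a+1) * Equiv.swap b (b+1) = Equiv.swap b (b+1) * Equiv.swap a (a+1) := by
  ext x
  simp only [Equiv.Perm.mul_apply, Equiv.swap_apply_def]
  split_ifs <;> omega

def permOf : MB →* Equiv.Perm ℕ :=
  mbLift (fun i => Equiv.swap (i : ℕ) (i + 1))
    (fun i => by simpa [PNat.add_coe] using swap_braid (i : ℕ))
    (fun i j h => by
      have : (i : ℕ) + 2 ≤ (j : ℕ) := by exact_mod_cast h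
      simpa [PNat.add_coe] using swap_comm' (i : ℕ) (j : ℕ) this)

lemma permOf_X {i : ℕ} (h : 1 ≤ i) : permOf (X i) = Equiv.swap i (i + 1) := by
  have : max i 1 = i := max_eq_left h
  simp [X, permOf, this]

def theta (t : ℕ+) : MB →* WithZero Unit :=
  mbLift (fun i => if i = t then 0 else 1)
    (fun i => by beta_reduce; split_ifs <;> simp_all)
    (fun i j h => by beta_reduce; split_ifs <;> simp_all)

lemma theta_X {j : ℕ} (hj : 1 ≤ j) (t : ℕ+) : theta t (X j) = if (j : ℕ) = (t : ℕ) then 0 else 1 := by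
  have : max j 1 = j := max_eq_left hj
  simp only [X, theta, mbLift_gen, mbLift_gen']
  congr 1
  simp [this, ← PNat.coe_inj]
  exact ⟨fun h => by subst h; rfl, fun h => Subtype.ext h⟩

def psi (t : ℕ+) : MB →* WithZero MB :=
  mbLift (fun i => if i = t then 0 else if i < t then (braidGen i : WithZero MB) else 1)
    (fun i => by
      rcases eq_or_ne i t with rfl | hit
      · simp
      rcases eq_or_ne (i+1) t with h1t | h1t
      · simp [h1t, hit]
      rcases lt_or_gt_of_ne hit with hlt | hgt
      · have h1lt : i + 1 < t := lt_of_le_of_ne hlt h1t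
        simp only [if_neg hit, if_neg h1t, if_pos hlt, if_pos h1lt, ← WithZero.coe_mul]
        exact_mod_cast braid_rel_mb i
      · have : ¬ (i < t) := not_lt.mpr hgt.le
        have h2 : ¬ (i + 1 < t) := by
          intro hc; exact absurd (lt_trans hgt (lt_of_le_of_lt (le_of_lt (PNat.lt_add_one_iff.mpr le_rfl)) hc)) (lt_irrefl _)
        simp [if_neg hit, if_neg h1t, this, h2])
    (fun i j h => by
      have hij : i < j := by have := h; rw [← PNat.coe_le_coe] at this; rw [← PNat.coe_lt_coe]; push_cast at this ⊢; omega
      rcases eq_or_ne i t with rfl | hit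
      · simp
      rcases eq_or_ne j t with rfl | hjt
      · simp
      rcases lt_or_gt_of_ne hit with hilt | higt
      · rcases lt_or_gt_of_ne hjt with hjlt | hjgt
        · simp only [if_neg hit, if_neg hjt, if_pos hilt, if_pos hjlt, ← WithZero.coe_mul]
          exact_mod_cast comm_rel_mb h
        · simp [if_neg hit, if_neg hjt, if_pos hilt, not_lt.mpr hjgt.le]
      · have hjgt : t < j := lt_trans higt hij
        simp [if_neg hit, if_neg hjt, not_lt.mpr higt.le, not_lt.mpr hjgt.le])

lemma psi_X_lt {j : ℕ} (hj : 1 ≤ j) (t : ℕ+) (h : j < (t : ℕ)) :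
    psi t (X j) = ((X j : MB) : WithZero MB) := by
  have hm : max j 1 = j := max_eq_left hj
  simp only [X, psi, mbLift_gen, mbLift_gen']
  rw [if_neg, if_pos]
  · exact (show max j 1 < (t : ℕ) by omega)
  · exact fun hc => by have := congrArg PNat.val hc; change max j 1 = (t : ℕ) at this; omega

lemma psi_X_gt {j : ℕ} (t : ℕ+) (h : (t : ℕ) < j) : psi t (X j) = 1 := by
  have hj : 1 ≤ j := le_trans t.2 h.le
  have hm : max j 1 = j := max_eq_left hj
  simp only [X, psi, mbLift_gen, mbLift_gen']
  rw [if_neg, if_neg]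
  · exact fun hc => by change max j 1 < (t : ℕ) at hc; omega
  · exact fun hc => by have := congrArg PNat.val hc; change max j 1 = (t : ℕ) at this; omega

lemma X_comm_s1 {a b : ℕ} (ha : 1 ≤ a) (h : a + 2 ≤ b) : X a * X b = X b * X a := by
  have hb : 1 ≤ b := by omega
  have hma : max a 1 = a := max_eq_left ha
  have hmb : max b 1 = b := max_eq_left hb
  simp only [X]
  apply comm_rel_mb
  refine (PNat.coe_le_coe (⟨max a 1, by omega⟩ + 2) ⟨max b 1, by omega⟩).mp ?_
  change max a 1 + 2 ≤ max b 1
  omega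

lemma prod_comm_single (g : MB) (l : List ℕ) (h : ∀ b ∈ l, X b * g = g * X b) :
    (l.map X).prod * g = g * (l.map X).prod := by
  induction l with
  | nil => simp
  | cons a l ih =>
    simp only [List.map_cons, List.prod_cons, mul_assoc]
    rw [ih (fun b hb => h b (List.mem_cons_of_mem _ hb)), ← mul_assoc, ← mul_assoc,
      h a (List.mem_cons_self)]

lemma prod_comm_words (l₁ l₂ : List ℕ) (h : ∀ a ∈ l₁, ∀ b ∈ l₂, X b * X a = X a * X b) :
    (l₁.map X).prod * (l₂.map X).prod = (l₂.map X).prod * (l₁.map X).prod := by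
  induction l₁ with
  | nil => simp
  | cons a l ih =>
    simp only [List.map_cons, List.prod_cons, mul_assoc]
    rw [ih (fun a ha => h a (List.mem_cons_of_mem _ ha)), ← mul_assoc, ← mul_assoc]
    congr 1
    exact (prod_comm_single (X a) l₂ (fun b hb => h a (List.mem_cons_self) b hb)).symm

lemma prod_split (p : ℕ → Bool) (w : List ℕ)
    (hcomm : ∀ a ∈ w, ∀ b ∈ w, p a = true → p b = false → X b * X a = X a * X b) :
    ((w.map X).prod) = ((w.filter p).map X).prod * ((w.filter (fun i => ! p i)).map X).prod := by
  induction w with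
  | nil => simp
  | cons c w ih =>
    have ih' := ih (fun a ha b hb hpa hpb =>
      hcomm a (List.mem_cons_of_mem _ ha) b (List.mem_cons_of_mem _ hb) hpa hpb)
    rcases hc : p c with hf | ht
    · -- p c = false
      rw [List.filter_cons, List.filter_cons, if_neg (by simp [hc]), if_pos (by simp [hc])]
      simp only [List.map_cons, List.prod_cons, ih', ← mul_assoc]
      congr 1
      exact (prod_comm_single (X c) (w.filter p) (fun b hb => by
        have hb' := List.mem_filter.mp hb
        exact (hcomm b (List.mem_cons_of_mem _ hb'.1) c (List.mem_cons_self) hb'.2 hc).symm)).symm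
    · rw [List.filter_cons, List.filter_cons, if_pos (by simp [hc]), if_neg (by simp [hc])]
      simp only [List.map_cons, List.prod_cons, ih', mul_assoc]

lemma perm_prod_fix (w : List ℕ) (x : ℕ) (h : ∀ a ∈ w, 1 ≤ a ∧ a ≠ x ∧ a + 1 ≠ x) :
    permOf ((w.map X).prod) x = x := by
  induction w with
  | nil => simp
  | cons a w ih =>
    obtain ⟨ha1, ha2, ha3⟩ := h a (List.mem_cons_self)
    simp only [List.map_cons, List.prod_cons, map_mul, Equiv.Perm.mul_apply,
      ih (fun b hb => h b (List.mem_cons_of_mem _ hb)), permOf_X ha1]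
    exact Equiv.swap_apply_of_ne_of_ne (Ne.symm ha2) (Ne.symm ha3)

lemma perm_prod_gt (w : List ℕ) (c : ℕ) (h : ∀ a ∈ w, 1 ≤ a ∧ a ≠ c) (x : ℕ) :
    c < permOf ((w.map X).prod) x ↔ c < x := by
  induction w generalizing x with
  | nil => simp
  | cons a w ih =>
    obtain ⟨ha1, ha2⟩ := h a (List.mem_cons_self)
    simp only [List.map_cons, List.prod_cons, map_mul, Equiv.Perm.mul_apply, permOf_X ha1]
    rw [show (Equiv.swap a (a+1)) (permOf ((w.map X).prod) x) =
        (Equiv.swap a (a+1)) (permOf ((w.map X).prod) x) from rfl]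
    have key : ∀ y, c < (Equiv.swap a (a+1)) y ↔ c < y := by
      intro y
      simp only [Equiv.swap_apply_def]
      split_ifs <;> omega
    rw [key, ih (fun b hb => h b (List.mem_cons_of_mem _ hb))]

lemma perm_prod_gt_inv (w : List ℕ) (c : ℕ) (h : ∀ a ∈ w, 1 ≤ a ∧ a ≠ c) (x : ℕ) :
    c < (permOf ((w.map X).prod))⁻¹ x ↔ c < x := by
  conv_rhs => rw [← Equiv.apply_symm_apply (permOf ((w.map X).prod)) x]
  rw [perm_prod_gt w c h]
  exact Iff.rfl

lemma theta_prod_one (t : ℕ+) (w : List ℕ) (h : ∀ i ∈ w, 1 ≤ i ∧ i ≠ (t : ℕ)) :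
    theta t ((w.map X).prod) = 1 := by
  induction w with
  | nil => simp
  | cons a w ih =>
    obtain ⟨ha1, ha2⟩ := h a (List.mem_cons_self)
    simp only [List.map_cons, List.prod_cons, map_mul, theta_X ha1, if_neg ha2,
      ih (fun b hb => h b (List.mem_cons_of_mem _ hb)), one_mul]

lemma theta_zero_of_dvd {j : ℕ} (hj : 1 ≤ j) {α : MB} (h : ∃ δ ε : MB, α = δ * X j * ε) :
    theta ⟨j, hj⟩ α = 0 := by
  obtain ⟨δ, ε, rfl⟩ := h
  simp [map_mul, theta_X hj ⟨j, hj⟩]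

lemma mem_of_dvd {j : ℕ} (hj : 1 ≤ j) (w : List ℕ) (hw : ∀ i ∈ w, 1 ≤ i)
    (h : ∃ δ ε : MB, (w.map X).prod = δ * X j * ε) : j ∈ w := by
  by_contra hmem
  have h0 := theta_zero_of_dvd hj h
  rw [theta_prod_one ⟨j, hj⟩ w (fun i hi => ⟨hw i hi, by rintro rfl; exact hmem hi⟩)] at h0
  exact one_ne_zero h0

lemma dvd_of_mem {j : ℕ} (w : List ℕ) (h : j ∈ w) :
    ∃ δ ε : MB, (w.map X).prod = δ * X j * ε := by
  obtain ⟨s, t, rfl⟩ := List.append_of_mem h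
  exact ⟨(s.map X).prod, (t.map X).prod, by simp [List.prod_append, mul_assoc]⟩

lemma psi_prod_coe (t : ℕ+) (w : List ℕ) (h : ∀ i ∈ w, 1 ≤ i ∧ i < (t : ℕ)) :
    psi t ((w.map X).prod) = ((w.map X).prod : MB) := by
  induction w with
  | nil => simp
  | cons a w ih =>
    obtain ⟨ha1, ha2⟩ := h a (List.mem_cons_self)
    simp only [List.map_cons, List.prod_cons, map_mul, psi_X_lt ha1 t ha2,
      ih (fun b hb => h b (List.mem_cons_of_mem _ hb)), WithZero.coe_mul]

lemma psi_prod_one (t : ℕ+) (w : List ℕ) (h : ∀ i ∈ w, (t : ℕ) < i) :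
    psi t ((w.map X).prod) = 1 := by
  induction w with
  | nil => simp
  | cons a w ih =>
    simp only [List.map_cons, List.prod_cons, map_mul, psi_X_gt t (h a (List.mem_cons_self)),
      ih (fun b hb => h b (List.mem_cons_of_mem _ hb)), one_mul]

/-- Theorem 1.3: if `β ∈ SB_n` with `x_{n-1} ∣ β` and `m ≥ 1`, then for
`γ ∈ SB_{n+m}`, one has `γ ∈ C_{n+m}(β)` iff `γ = γ₁γ₂` with `γ₁ ∈ C_n(β)` and
`γ₂ ∈ E_n = {α ∈ SB_{n+m} : x_j ∤ α for all 1 ≤ j ≤ n}`. -/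
theorem simple_centralizer_structure (n m : ℕ) (hn : 2 ≤ n) (hm : 1 ≤ m) (β : MB)
    (hβ : β ∈ SB n) (hdvd : GenDvd (n - 1) β) (γ : MB) (hγ : γ ∈ SB (n + m)) :
    γ ∈ C (n + m) β ↔
      ∃ γ₁ γ₂ : MB, γ₁ ∈ C n β ∧
        γ₂ ∈ {α ∈ SB (n + m) | ∀ j : ℕ, 1 ≤ j → j ≤ n → ¬ GenDvd j α} ∧
        γ = γ₁ * γ₂ := by
  obtain ⟨wβ, hwβnd, hwβb, hβeq⟩ := hβ
  have hn1' : (1 : ℕ) ≤ n - 1 := by omega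
  have hn1mem : n - 1 ∈ wβ := by
    apply mem_of_dvd hn1' wβ (fun i hi => (hwβb i hi).1)
    rw [← hβeq]; exact hdvd
  -- β's permutation moves n
  have hπfix : ∀ x, n < x → permOf β x = x := by
    intro x hx
    rw [hβeq]
    exact perm_prod_fix wβ x (fun a ha => ⟨(hwβb a ha).1, by have := (hwβb a ha).2; omega,
      by have := (hwβb a ha).2; omega⟩)
  have hπn : permOf β n ≠ n := by
    obtain ⟨uβ, vβ, huv⟩ := List.append_of_mem hn1mem
    have hndβ : (n-1) ∉ uβ ∧ (n-1) ∉ vβ := by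
      rw [huv] at hwβnd
      have h1 := List.Nodup.of_append_right hwβnd
      have h2 : List.Disjoint uβ ((n-1) :: vβ) := List.disjoint_of_nodup_append hwβnd
      exact ⟨fun hc => h2 hc (List.mem_cons_self), (List.nodup_cons.mp h1).1⟩
    have hub : ∀ a ∈ uβ, 1 ≤ a ∧ a < n ∧ a ≠ n - 1 := fun a ha =>
      ⟨(hwβb a (by rw [huv]; simp [ha])).1, (hwβb a (by rw [huv]; simp [ha])).2,
        fun hc => hndβ.1 (hc ▸ ha)⟩
    have hvb : ∀ a ∈ vβ, 1 ≤ a ∧ a < n ∧ a ≠ n - 1 := fun a ha =>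
      ⟨(hwβb a (by rw [huv]; simp [ha])).1, (hwβb a (by rw [huv]; simp [ha])).2,
        fun hc => hndβ.2 (hc ▸ ha)⟩
    have hdecomp : permOf β = permOf ((uβ.map X).prod) * Equiv.swap (n-1) (n-1+1)
        * permOf ((vβ.map X).prod) := by
      rw [hβeq, huv]
      simp only [List.map_append, List.map_cons, List.prod_append, List.prod_cons, map_mul,
        permOf_X hn1', mul_assoc]
    rw [hdecomp]
    intro hc
    simp only [Equiv.Perm.mul_apply] at hc
    rw [perm_prod_fix vβ n (fun a ha => ⟨(hvb a ha).1, by have := hvb a ha; omega,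
      by have := hvb a ha; omega⟩)] at hc
    rw [show (n-1+1) = n by omega, Equiv.swap_apply_right] at hc
    have := (perm_prod_gt uβ (n-1) (fun a ha => ⟨(hub a ha).1, (hub a ha).2.2⟩) (n-1)).not.mpr
      (lt_irrefl _)
    omega
  constructor
  · rintro ⟨-, hcm⟩
    obtain ⟨w, hwnd, hwb, hγeq⟩ := hγ
    -- Step A : n ∉ w
    have hnw : n ∉ w := by
      intro hnmem
      obtain ⟨u, v, huv⟩ := List.append_of_mem hnmem
      have hnd : n ∉ u ∧ n ∉ v := by
        rw [huv] at hwnd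
        have h1 := List.Nodup.of_append_right hwnd
        have h2 : List.Disjoint u (n :: v) := List.disjoint_of_nodup_append hwnd
        exact ⟨fun hc => h2 hc (List.mem_cons_self), (List.nodup_cons.mp h1).1⟩
      have hub : ∀ a ∈ u, 1 ≤ a ∧ a ≠ n := fun a ha =>
        ⟨(hwb a (by rw [huv]; simp [ha])).1, fun hc => hnd.1 (hc ▸ ha)⟩
      have hvb : ∀ a ∈ v, 1 ≤ a ∧ a ≠ n := fun a ha =>
        ⟨(hwb a (by rw [huv]; simp [ha])).1, fun hc => hnd.2 (hc ▸ ha)⟩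
      set A := permOf ((u.map X).prod) with hA
      set B := permOf ((v.map X).prod) with hB
      have hσ : permOf γ = A * Equiv.swap n (n+1) * B := by
        rw [hγeq, huv]
        simp only [List.map_append, List.map_cons, List.prod_append, List.prod_cons, map_mul,
          permOf_X (by omega : 1 ≤ n), mul_assoc]
        rfl
      have hcomm' : permOf β * permOf γ = permOf γ * permOf β := by
        rw [← map_mul, ← map_mul, hcm]
      by_cases hcase : n - 1 ∈ u
      · -- n-1 ∉ v, so B fixes n
        have hn1v : n - 1 ∉ v := by
          rw [huv] at hwnd
          have h2 : List.Disjoint u (n :: v) := List.disjoint_of_nodup_append hwnd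
          exact fun hc => h2 hcase (List.mem_cons_of_mem _ hc)
        have hBn : B n = n := perm_prod_fix v n (fun a ha => ⟨(hvb a ha).1, (hvb a ha).2,
          by have h1 := hvb a ha; have h2 : a ≠ n - 1 := fun hc => hn1v (hc ▸ ha); omega⟩)
        have hσn : n < permOf γ n := by
          rw [hσ]
          simp only [Equiv.Perm.mul_apply, hBn, Equiv.swap_apply_left]
          exact (perm_prod_gt u n (hub) (n+1)).mpr (by omega)
        have hpt := DFunLike.congr_fun hcomm' n
        simp only [Equiv.Perm.mul_apply] at hpt
        rw [hπfix _ hσn] at hpt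
        exact hπn ((permOf γ).injective hpt.symm)
      · -- n-1 ∉ u, so A fixes n
        have hAn : A n = n := perm_prod_fix u n (fun a ha => ⟨(hub a ha).1, (hub a ha).2,
          by have h1 := hub a ha; have h2 : a ≠ n - 1 := fun hc => hcase (hc ▸ ha); omega⟩)
        have hσinv : n < (permOf γ)⁻¹ n := by
          rw [hσ]
          simp only [mul_inv_rev, Equiv.Perm.mul_apply]
          rw [show A⁻¹ n = n from Equiv.Perm.inv_eq_iff_eq.mpr hAn.symm,
            Equiv.swap_inv, Equiv.swap_apply_left]
          exact (perm_prod_gt_inv v n hvb (n+1)).mpr (by omega)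
        have hcomm'' : permOf β * (permOf γ)⁻¹ = (permOf γ)⁻¹ * permOf β :=
          Commute.inv_right hcomm'
        have hpt := DFunLike.congr_fun hcomm'' n
        simp only [Equiv.Perm.mul_apply] at hpt
        rw [hπfix _ hσinv] at hpt
        exact hπn (((permOf γ)⁻¹).injective hpt.symm)
    -- Step B : split the word of γ
    have hsplit := prod_split (fun i => decide (i < n)) w (by
      intro a ha b hb hpa hpb
      simp only [decide_eq_true_eq] at hpa
      simp only [decide_eq_false_iff_not] at hpb
      have hbn : b ≠ n := fun hc => hnw (hc ▸ hb)
      exact (X_comm_s1 (hwb a ha).1 (by omega)).symm)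
    set lo := w.filter (fun i => decide (i < n)) with hlo
    set hi := w.filter (fun i => !decide (i < n)) with hhi
    have hlob : ∀ i ∈ lo, 1 ≤ i ∧ i < n := by
      intro i hi'
      obtain ⟨h1, h2⟩ := List.mem_filter.mp hi'
      exact ⟨(hwb i h1).1, by simpa using h2⟩
    have hhib : ∀ i ∈ hi, n < i ∧ i < n + m := by
      intro i hi'
      obtain ⟨h1, h2⟩ := List.mem_filter.mp hi'
      have : ¬ (i < n) := by simpa using h2
      have hbn : i ≠ n := fun hc => hnw (hc ▸ h1)
      exact ⟨by omega, (hwb i h1).2⟩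
    set γ₁ := (lo.map X).prod with hγ₁
    set γ₂ := (hi.map X).prod with hγ₂
    have hγeq2 : γ = γ₁ * γ₂ := by rw [hγeq, hsplit]
    -- γ₂ commutes with β
    have hcβ2 : β * γ₂ = γ₂ * β := by
      rw [hβeq, hγ₂]
      exact prod_comm_words wβ hi (fun a ha b hb =>
        (X_comm_s1 (hwβb a ha).1 (by have := (hwβb a ha).2; have := (hhib b hb).1; omega)).symm)
    -- β commutes with γ₁ via psi
    have hkey : β * γ₁ * γ₂ = γ₁ * β * γ₂ := by
      calc β * γ₁ * γ₂ = β * γ := by rw [hγeq2, mul_assoc]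
        _ = γ * β := hcm
        _ = γ₁ * (γ₂ * β) := by rw [hγeq2, mul_assoc]
        _ = γ₁ * (β * γ₂) := by rw [hcβ2]
        _ = γ₁ * β * γ₂ := by rw [mul_assoc]
    have tpos : 0 < n := by omega
    have hψ := congrArg (psi ⟨n, tpos⟩) hkey
    have hcoe : ((⟨n, tpos⟩ : ℕ+) : ℕ) = n := rfl
    rw [map_mul, map_mul, map_mul, map_mul,
      psi_prod_one ⟨n, tpos⟩ hi (fun i hi' => (hhib i hi').1),
      show psi ⟨n, tpos⟩ β = (β : WithZero MB) by
        rw [hβeq]; exact psi_prod_coe ⟨n, tpos⟩ wβ (fun i hi' => hwβb i hi'),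
      show psi ⟨n, tpos⟩ γ₁ = (γ₁ : WithZero MB) from psi_prod_coe ⟨n, tpos⟩ lo
        (fun i hi' => hlob i hi'),
      mul_one, mul_one, ← WithZero.coe_mul, ← WithZero.coe_mul] at hψ
    have hβγ₁ : β * γ₁ = γ₁ * β := WithZero.coe_inj.mp hψ
    refine ⟨γ₁, γ₂, ⟨⟨lo, List.Nodup.filter _ hwnd, hlob, rfl⟩, hβγ₁⟩,
      ⟨⟨hi, List.Nodup.filter _ hwnd, fun i hi' =>
        ⟨by have := (hhib i hi').1; omega, (hhib i hi').2⟩, rfl⟩, ?_⟩, hγeq2⟩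
    intro j hj1 hj2 hdv
    have := mem_of_dvd hj1 hi (fun i hi' => by have := (hhib i hi').1; omega) hdv
    have := (hhib j this).1
    omega
  · rintro ⟨γ₁, γ₂, ⟨hγ₁S, hγ₁c⟩, ⟨hγ₂S, hγ₂E⟩, rfl⟩
    refine ⟨hγ, ?_⟩
    obtain ⟨w₂, hnd₂, hb₂, rfl⟩ := hγ₂S
    have hw₂gt : ∀ i ∈ w₂, n < i := by
      intro i hi
      by_contra hle
      exact hγ₂E i (hb₂ i hi).1 (by omega) (dvd_of_mem w₂ hi)
    have hcβ2 : β * (w₂.map X).prod = (w₂.map X).prod * β := by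
      rw [hβeq]
      exact prod_comm_words wβ w₂ (fun a ha b hb =>
        (X_comm_s1 (hwβb a ha).1 (by have := (hwβb a ha).2; have := hw₂gt b hb; omega)).symm)
    calc β * (γ₁ * (w₂.map X).prod) = (β * γ₁) * (w₂.map X).prod := by rw [mul_assoc]
      _ = (γ₁ * β) * (w₂.map X).prod := by rw [hγ₁c]
      _ = γ₁ * (β * (w₂.map X).prod) := by rw [mul_assoc]
      _ = γ₁ * ((w₂.map X).prod * β) := by rw [hcβ2]
      _ = γ₁ * (w₂.map X).prod * β := by rw [mul_assoc]
end

section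
/- Let n ≥ 2 and let β, γ ∈ MB_∞. If x_{n−1} left-divides βγ and x_{n−1} does not divide β, then x_{n−1} left-divides γ. -/
namespace BraidAux


abbrev W := List ℕ+

/-- far generators (they commute) -/
def Far (a b : ℕ+) : Prop := a + 2 ≤ b ∨ b + 2 ≤ a

/-- adjacent generators (braid relation) -/
def Adj (a b : ℕ+) : Prop := b = a + 1 ∨ a = b + 1

lemma far_iff (a b : ℕ+) : Far a b ↔ ((a:ℕ)+2 ≤ (b:ℕ) ∨ (b:ℕ)+2 ≤ (a:ℕ)) := by
  unfold Far
  rw [← PNat.coe_le_coe, ← PNat.coe_le_coe]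
  push_cast
  rfl

lemma adj_iff (a b : ℕ+) : Adj a b ↔ ((b:ℕ) = (a:ℕ)+1 ∨ (a:ℕ) = (b:ℕ)+1) := by
  unfold Adj
  rw [← PNat.coe_inj, ← PNat.coe_inj]
  push_cast
  rfl

lemma eq_iff_coe (a b : ℕ+) : a = b ↔ (a:ℕ) = (b:ℕ) := PNat.coe_inj.symm

lemma far_symm {a b : ℕ+} (h : Far a b) : Far b a := h.symm
lemma adj_symm {a b : ℕ+} (h : Adj a b) : Adj b a := h.symm

lemma pnat_cases (a b : ℕ+) : a = b ∨ Adj a b ∨ Far a b := by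
  rw [far_iff, adj_iff, eq_iff_coe]; omega

lemma not_adj_and_far {a b : ℕ+} (h1 : Adj a b) (h2 : Far a b) : False := by
  rw [adj_iff] at h1; rw [far_iff] at h2; omega

lemma not_eq_of_adj {a b : ℕ+} (h : Adj a b) : a ≠ b := by
  rw [adj_iff] at h; rw [Ne, eq_iff_coe]; omega

lemma not_eq_of_far {a b : ℕ+} (h : Far a b) : a ≠ b := by
  rw [far_iff] at h; rw [Ne, eq_iff_coe]; omega

lemma adj_adj_adj {a b c : ℕ+} (h1 : Adj a c) (h2 : Adj b c) (h3 : Adj a b) : False := by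
  rw [adj_iff] at h1 h2 h3; omega

lemma far_adj_ne {a b c : ℕ+} (h1 : Far a c) (h2 : Adj b c) : a ≠ b := by
  rw [far_iff] at h1; rw [adj_iff] at h2; rw [Ne, eq_iff_coe]; omega

/-- The braid relations at the level of lists. -/
def LRel : W → W → Prop := fun x y =>
  (∃ i : ℕ+, x = [i+1, i, i+1] ∧ y = [i, i+1, i]) ∨
  (∃ i j : ℕ+, i + 2 ≤ j ∧ x = [i, j] ∧ y = [j, i])

/-- One elementary rewriting step (in either direction). -/
def Step : W → W → Prop := fun u v =>
  ∃ s t x y, (LRel x y ∨ LRel y x) ∧ u = s ++ x ++ t ∧ v = s ++ y ++ t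

/-- The equivalence generated by the braid relations, as chains of steps. -/
def br : W → W → Prop := Relation.ReflTransGen Step

lemma step_symm {u v : W} (h : Step u v) : Step v u := by
  obtain ⟨s, t, x, y, hxy, hu, hv⟩ := h
  exact ⟨s, t, y, x, hxy.symm, hv, hu⟩

lemma br_refl (u : W) : br u u := Relation.ReflTransGen.refl

lemma br_trans {u v w : W} (h1 : br u v) (h2 : br v w) : br u w := h1.trans h2

lemma br_symm {u v : W} (h : br u v) : br v u := by
  induction h with
  | refl => exact br_refl _
  | tail _ hstep ih => exact br_trans (Relation.ReflTransGen.single (step_symm hstep)) ih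

lemma br_of_step {u v : W} (h : Step u v) : br u v := Relation.ReflTransGen.single h

lemma step_append_left (s : W) {u v : W} (h : Step u v) : Step (s ++ u) (s ++ v) := by
  obtain ⟨s', t', x, y, hxy, hu, hv⟩ := h
  exact ⟨s ++ s', t', x, y, hxy, by simp [hu], by simp [hv]⟩

lemma step_append_right (t : W) {u v : W} (h : Step u v) : Step (u ++ t) (v ++ t) := by
  obtain ⟨s', t', x, y, hxy, hu, hv⟩ := h
  exact ⟨s', t' ++ t, x, y, hxy, by simp [hu], by simp [hv]⟩

lemma br_append_left (s : W) {u v : W} (h : br u v) : br (s ++ u) (s ++ v) := by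
  induction h with
  | refl => exact br_refl _
  | tail _ hstep ih => exact ih.tail (step_append_left s hstep)

lemma br_append_right (t : W) {u v : W} (h : br u v) : br (u ++ t) (v ++ t) := by
  induction h with
  | refl => exact br_refl _
  | tail _ hstep ih => exact ih.tail (step_append_right t hstep)

lemma br_cons (a : ℕ+) {u v : W} (h : br u v) : br (a :: u) (a :: v) :=
  br_append_left [a] h

lemma br_append {u v u' v' : W} (h1 : br u u') (h2 : br v v') :
    br (u ++ v) (u' ++ v') :=
  br_trans (br_append_right v h1) (br_append_left u' h2)

lemma lrel_length {x y : W} (h : LRel x y) : x.length = y.length := by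
  rcases h with ⟨i, rfl, rfl⟩ | ⟨i, j, _, rfl, rfl⟩ <;> rfl

lemma step_length {u v : W} (h : Step u v) : u.length = v.length := by
  obtain ⟨s, t, x, y, hxy, rfl, rfl⟩ := h
  rcases hxy with h | h <;>
    simp only [List.length_append, lrel_length h]

lemma br_length {u v : W} (h : br u v) : u.length = v.length := by
  induction h with
  | refl => rfl
  | tail _ hstep ih => exact ih.trans (step_length hstep)

/-- Swapping two far generators at the head of a word. -/
lemma br_swap {a c : ℕ+} (h : Far a c) (t : W) : br (a :: c :: t) (c :: a :: t) := by
  rcases h with h | h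
  · exact br_of_step ⟨[], t, [a, c], [c, a], Or.inl (Or.inr ⟨a, c, h, rfl, rfl⟩), rfl, rfl⟩
  · exact br_of_step ⟨[], t, [a, c], [c, a], Or.inr (Or.inr ⟨c, a, h, rfl, rfl⟩), rfl, rfl⟩

/-- The braid relation at the head of a word, for adjacent generators. -/
lemma br_braid {a c : ℕ+} (h : Adj a c) (t : W) : br (a :: c :: a :: t) (c :: a :: c :: t) := by
  rcases h with h | h
  · subst h
    exact br_of_step ⟨[], t, [a, a+1, a], [a+1, a, a+1],
      Or.inr (Or.inl ⟨a, rfl, rfl⟩), rfl, rfl⟩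
  · subst h
    exact br_of_step ⟨[], t, [c+1, c, c+1], [c, c+1, c],
      Or.inl (Or.inl ⟨c, rfl, rfl⟩), rfl, rfl⟩

/-- Membership in a word is invariant under `br`. -/
lemma step_mem {u v : W} (h : Step u v) {i : ℕ+} (hi : i ∈ v) : i ∈ u := by
  obtain ⟨s, t, x, y, hxy, rfl, rfl⟩ := h
  have hxy' : ∀ j, j ∈ y → j ∈ x := by
    rcases hxy with (⟨k, rfl, rfl⟩ | ⟨k, l, _, rfl, rfl⟩) | (⟨k, rfl, rfl⟩ | ⟨k, l, _, rfl, rfl⟩) <;>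
      intro j hj <;> simp at hj ⊢ <;> tauto
  simp only [List.mem_append] at hi ⊢
  rcases hi with (hi | hi) | hi
  · tauto
  · exact Or.inl (Or.inr (hxy' _ hi))
  · tauto

lemma br_mem {u v : W} (h : br u v) {i : ℕ+} (hi : i ∈ v) : i ∈ u := by
  induction h with
  | refl => exact hi
  | tail _ hstep ih => exact ih (step_mem hstep hi)
/-- The conclusion of Garside's first-letter lemma: given `br (a::P) (b::Q)`,
the relationship between `P` and `Q` depending on how `a` and `b` compare. -/
def Concl (a b : ℕ+) (P Q : W) : Prop :=
  (a = b ∧ br P Q) ∨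
  (Far a b ∧ ∃ Z, br P (b :: Z) ∧ br Q (a :: Z)) ∨
  (Adj a b ∧ ∃ Z, br P (b :: a :: Z) ∧ br Q (a :: b :: Z))

lemma concl_eq {a b : ℕ+} {P Q : W} (h : a = b) (hbr : br P Q) : Concl a b P Q :=
  Or.inl ⟨h, hbr⟩

lemma concl_far {a b : ℕ+} {P Q : W} (h : Far a b) (Z : W)
    (h1 : br P (b :: Z)) (h2 : br Q (a :: Z)) : Concl a b P Q :=
  Or.inr (Or.inl ⟨h, Z, h1, h2⟩)

lemma concl_adj {a b : ℕ+} {P Q : W} (h : Adj a b) (Z : W)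
    (h1 : br P (b :: a :: Z)) (h2 : br Q (a :: b :: Z)) : Concl a b P Q :=
  Or.inr (Or.inr ⟨h, Z, h1, h2⟩)

lemma concl_transport {a b : ℕ+} {P P' Q : W} (hP : br P P')
    (h : Concl a b P' Q) : Concl a b P Q := by
  rcases h with ⟨h, hbr⟩ | ⟨h, Z, h1, h2⟩ | ⟨h, Z, h1, h2⟩
  · exact concl_eq h (br_trans hP hbr)
  · exact concl_far h Z (br_trans hP h1) h2
  · exact concl_adj h Z (br_trans hP h1) h2

/-- The recursion hypothesis: the first-letter lemma holds for words of length at most `L`. -/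
def IH (L : ℕ) : Prop :=
  ∀ a b : ℕ+, ∀ P Q : W, P.length + 1 ≤ L → br (a :: P) (b :: Q) → Concl a b P Q

/-- Commutation at the head. -/
lemma commHead (L : ℕ) (ih : IH L) {a b c : ℕ+} {t Q : W}
    (hf : Far a c) (hlen : t.length + 1 ≤ L)
    (hM : Concl c b (a :: t) Q) : Concl a b (c :: t) Q := by
  rcases hM with ⟨heq, hbr⟩ | ⟨hcb, Z, h1, h2⟩ | ⟨hcb, Z, h1, h2⟩
  · -- c = b
    subst heq
    exact concl_far hf t (br_refl _) (br_symm hbr)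
  · -- Far c b
    rcases ih a b t Z hlen h1 with ⟨heq, hbr⟩ | ⟨hab, Y, g1, g2⟩ | ⟨hab, Y, g1, g2⟩
    · subst heq
      exact concl_eq rfl (br_trans (br_cons c hbr) (br_symm h2))
    · refine concl_far hab (c :: Y) ?_ ?_
      · exact br_trans (br_cons c g1) (br_swap hcb _)
      · exact br_trans h2 (br_trans (br_cons c g2) (br_swap (far_symm hf) _))
    · refine concl_adj hab (c :: Y) ?_ ?_
      · exact br_trans (br_cons c g1)
          (br_trans (br_swap hcb _) (br_cons b (br_swap (far_symm hf) _)))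
      · exact br_trans h2 (br_trans (br_cons c g2)
          (br_trans (br_swap (far_symm hf) _) (br_cons a (br_swap hcb _))))
  · -- Adj c b
    have hlen1 : Z.length + 1 ≤ L := by
      have := br_length h1; simp at this; omega
    rcases ih a b t (c :: Z) hlen h1 with ⟨heq, hbr⟩ | ⟨hab, Y, g1, g2⟩ | ⟨hab, Y, g1, g2⟩
    · subst heq
      exact (not_adj_and_far (adj_symm hcb) hf).elim
    · -- Far a b
      rcases ih c a Z Y hlen1 g2 with ⟨heq, _⟩ | ⟨hca, V, k1, k2⟩ | ⟨hca, _⟩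
      · exact (not_eq_of_far hf heq.symm).elim
      · refine concl_far hab (c :: b :: V) ?_ ?_
        · exact br_trans (br_cons c g1)
            (br_trans (br_cons c (br_cons b k2)) (br_braid hcb V))
        · exact br_trans h2 (br_trans (br_cons c (br_cons b k1))
            (br_trans (br_cons c (br_swap (far_symm hab) V))
              (br_swap (far_symm hf) (b :: V))))
      · exact (not_adj_and_far (adj_symm hca) hf).elim
    · -- Adj a b
      rcases ih c a Z (b :: Y) hlen1 g2 with ⟨heq, _⟩ | ⟨hca, V, k1, k2⟩ | ⟨hca, _⟩
      · exact (not_eq_of_far hf heq.symm).elim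
      · have hlen2 : Y.length + 1 ≤ L := by
          have := br_length g1; simp at this; omega
        rcases ih b c Y V hlen2 k2 with ⟨heq, _⟩ | ⟨hbc, _⟩ | ⟨hbc, U, m1, m2⟩
        · exact (not_eq_of_adj hcb heq.symm).elim
        · exact (not_adj_and_far (adj_symm hcb) hbc).elim
        · refine concl_adj hab (c :: b :: a :: U) ?_ ?_
          · -- c::t ≡ b::a::c::b::a::U
            refine br_trans (br_cons c g1) (br_trans (br_cons c (br_cons b (br_cons a m1))) ?_)
            -- c::b::a::c::b::U ≡ b::a::c::b::a::U
            refine br_trans (br_cons c (br_cons b (br_swap hf (b :: U)))) ?_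
            refine br_trans (br_braid hcb (a :: b :: U)) ?_
            refine br_trans (br_cons b (br_cons c (br_braid (adj_symm hab) U))) ?_
            exact br_cons b (br_swap (far_symm hf) (b :: a :: U))
          · -- Q ≡ a::b::c::b::a::U
            refine br_trans h2 (br_trans (br_cons c (br_cons b k1)) ?_)
            refine br_trans (br_cons c (br_cons b (br_cons a m2))) ?_
            -- c::b::a::b::c::U ≡ a::b::c::b::a::U
            refine br_trans (br_cons c (br_braid (adj_symm hab) (c :: U))) ?_
            refine br_trans (br_swap (far_symm hf) (b :: a :: c :: U)) ?_
            refine br_trans (br_cons a (br_cons c (br_cons b (br_swap hf U)))) ?_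
            exact br_cons a (br_braid hcb (a :: U))
      · exact (not_adj_and_far (adj_symm hca) hf).elim
/-- Braid relation at the head. -/
lemma braidHead (L : ℕ) (ih : IH L) {a b c : ℕ+} {t Q : W}
    (hadj : Adj a c) (hlen : t.length + 2 ≤ L)
    (hM : Concl c b (a :: c :: t) Q) : Concl a b (c :: a :: t) Q := by
  rcases hM with ⟨heq, hbr⟩ | ⟨hcb, Z, h1, h2⟩ | ⟨hcb, Z, h1, h2⟩
  · -- c = b
    subst heq
    exact concl_adj hadj t (br_refl _) (br_symm hbr)
  · -- Far c b
    have hlen0 : (c :: t).length + 1 ≤ L := by simp; omega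
    rcases ih a b (c :: t) Z hlen0 h1 with ⟨heq, hbr⟩ | ⟨hab, Y, g1, g2⟩ | ⟨hab, Y, g1, g2⟩
    · subst heq
      exact (not_adj_and_far hadj (far_symm hcb)).elim
    · -- Far a b
      have hlen1 : t.length + 1 ≤ L := by omega
      rcases ih c b t Y hlen1 g1 with ⟨heq, _⟩ | ⟨_, V, k1, k2⟩ | ⟨hcb', _⟩
      · exact (not_eq_of_far hcb heq).elim
      · refine concl_far hab (c :: a :: V) ?_ ?_
        · refine br_trans (br_cons c (br_cons a k1)) ?_
          refine br_trans (br_cons c (br_swap hab V)) ?_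
          exact br_swap hcb (a :: V)
        · refine br_trans h2 (br_trans (br_cons c g2) ?_)
          refine br_trans (br_cons c (br_cons a k2)) ?_
          exact br_braid (adj_symm hadj) V
      · exact (not_adj_and_far hcb' hcb).elim
    · -- Adj a b
      have hlen1 : t.length + 1 ≤ L := by omega
      rcases ih c b t (a :: Y) hlen1 g1 with ⟨heq, _⟩ | ⟨_, V, k1, k2⟩ | ⟨hcb', _⟩
      · exact (not_eq_of_far hcb heq).elim
      · have hlen2 : Y.length + 1 ≤ L := by
          have := br_length g1; simp at this; omega
        rcases ih a c Y V hlen2 k2 with ⟨heq, _⟩ | ⟨hac, _⟩ | ⟨_, U, m1, m2⟩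
        · exact (not_eq_of_adj hadj heq).elim
        · exact (not_adj_and_far hadj hac).elim
        · refine concl_adj hab (c :: a :: b :: U) ?_ ?_
          · -- c::a::t ≡ b::a::c::a::b::U
            refine br_trans (br_cons c (br_cons a k1)) ?_
            refine br_trans (br_cons c (br_cons a (br_cons b m2))) ?_
            -- c::a::b::a::c::U ≡ b::a::c::a::b::U
            refine br_trans (br_cons c (br_braid hab (c :: U))) ?_
            refine br_trans (br_swap hcb (a :: b :: c :: U)) ?_
            refine br_trans (br_cons b (br_cons c (br_cons a (br_swap (far_symm hcb) U)))) ?_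
            exact br_cons b (br_braid (adj_symm hadj) (b :: U))
          · -- Q ≡ a::b::c::a::b::U
            refine br_trans h2 (br_trans (br_cons c g2) ?_)
            refine br_trans (br_cons c (br_cons a (br_cons b m1))) ?_
            -- c::a::b::c::a::U ≡ a::b::c::a::b::U
            refine br_trans (br_cons c (br_cons a (br_swap (far_symm hcb) (a :: U)))) ?_
            refine br_trans (br_braid (adj_symm hadj) (b :: a :: U)) ?_
            refine br_trans (br_cons a (br_cons c (br_braid hab U))) ?_
            exact br_cons a (br_swap hcb (a :: b :: U))
      · exact (not_adj_and_far hcb' hcb).elim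
  · -- Adj c b
    have hlen0 : (c :: t).length + 1 ≤ L := by simp; omega
    rcases ih a b (c :: t) (c :: Z) hlen0 h1 with ⟨heq, hbr⟩ | ⟨hab, Y, g1, g2⟩ | ⟨hab, _⟩
    · -- a = b
      subst heq
      have hlen1 : t.length + 1 ≤ L := by omega
      rcases ih c c t Z hlen1 hbr with ⟨_, htZ⟩ | ⟨hcc, _⟩ | ⟨hcc, _⟩
      · exact concl_eq rfl
          (br_trans (br_cons c (br_cons a htZ)) (br_symm h2))
      · exact (not_eq_of_far hcc rfl).elim
      · exact (not_eq_of_adj hcc rfl).elim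
    · -- Far a b
      have hlen1 : t.length + 1 ≤ L := by omega
      rcases ih c b t Y hlen1 g1 with ⟨heq, _⟩ | ⟨hcb', _⟩ | ⟨_, V, k1, k2⟩
      · exact (not_eq_of_adj hcb heq).elim
      · exact (not_adj_and_far hcb hcb').elim
      · have hlenZ : Z.length + 1 ≤ L := by
          have := br_length h1; simp at this; omega
        rcases ih c a Z Y hlenZ g2 with ⟨heq, _⟩ | ⟨hca, _⟩ | ⟨_, U, m1, m2⟩
        · exact (not_eq_of_adj hadj heq.symm).elim
        · exact (not_adj_and_far (adj_symm hadj) hca).elim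
        · -- br (c::b::V) (c::a::U)
          have hbv : br (c :: b :: V) (c :: a :: U) := br_trans (br_symm k2) m2
          have hlenbv : (b :: V).length + 1 ≤ L := by
            have e1 := br_length g1; have e2 := br_length k2
            simp only [List.length_cons] at e1 e2 ⊢; omega
          rcases ih c c (b :: V) (a :: U) hlenbv hbv with ⟨_, hbv'⟩ | ⟨hcc, _⟩ | ⟨hcc, _⟩
          · have hlenV : V.length + 1 ≤ L := by
              have e1 := br_length g1; have e2 := br_length k2
              simp at e1 e2; omega
            rcases ih b a V U hlenV hbv' with ⟨heq, _⟩ | ⟨_, T, n1, n2⟩ | ⟨hba, _⟩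
            · exact (not_eq_of_far hab heq.symm).elim
            · refine concl_far hab (c :: b :: a :: c :: T) ?_ ?_
              · -- c::a::t ≡ b::(c::b::a::c::T)
                refine br_trans (br_cons c (br_cons a k1)) ?_
                refine br_trans (br_cons c (br_cons a (br_cons b (br_cons c n1)))) ?_
                -- c::a::b::c::a::T ≡ b::c::b::a::c::T
                refine br_trans (br_cons c (br_swap hab (c :: a :: T))) ?_
                refine br_trans (br_cons c (br_cons b (br_braid hadj T))) ?_
                exact br_braid hcb (a :: c :: T)
              · -- Q ≡ a::(c::b::a::c::T)
                refine br_trans h2 (br_trans (br_cons c (br_cons b m1)) ?_)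
                refine br_trans (br_cons c (br_cons b (br_cons a (br_cons c n2)))) ?_
                -- c::b::a::c::b::T ≡ a::c::b::a::c::T
                refine br_trans (br_cons c (br_swap (far_symm hab) (c :: b :: T))) ?_
                refine br_trans (br_cons c (br_cons a (br_braid (adj_symm hcb) T))) ?_
                refine br_trans (br_braid (adj_symm hadj) (b :: c :: T)) ?_
                exact br_cons a (br_cons c (br_swap hab (c :: T)))
            · exact (not_adj_and_far (adj_symm hba) hab).elim
          · exact (not_eq_of_far hcc rfl).elim
          · exact (not_eq_of_adj hcc rfl).elim
    · -- Adj a b : impossible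
      exact (adj_adj_adj hadj (adj_symm hcb) hab).elim
/-- Garside's first-letter lemma, by induction on word length. -/
theorem garside : ∀ L : ℕ, IH L := by
  intro L
  induction L with
  | zero => intro a b P Q hlen; omega
  | succ L ihL =>
    have main : ∀ b : ℕ+, ∀ Q : W, ∀ Wd : W, br Wd (b :: Q) →
        ∀ a : ℕ+, ∀ P : W, Wd = a :: P → P.length + 1 ≤ L + 1 → Concl a b P Q := by
      intro b Q Wd hWd
      induction hWd using Relation.ReflTransGen.head_induction_on with
      | refl =>
        intro a P hP _
        injection hP with h1 h2
        subst h1; subst h2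
        exact concl_eq rfl (br_refl _)
      | head hstep hchain ihM =>
        rename_i Wd' M
        intro a P hW hlen
        obtain ⟨s, t, x, y, hxy, hu, hv⟩ := hstep
        cases s with
        | cons a' s' =>
          have ha : a' = a ∧ P = s' ++ x ++ t := by
            rw [hW] at hu
            simp only [List.cons_append, List.cons.injEq] at hu
            exact ⟨hu.1.symm, hu.2⟩
          obtain ⟨rfl, rfl⟩ := ha
          have hMeq : M = a' :: (s' ++ y ++ t) := by simp [hv]
          have hlenM : (s' ++ y ++ t).length + 1 ≤ L + 1 := by
            have hl : Wd'.length = M.length := step_length ⟨_, _, _, _, hxy, hu, hv⟩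
            rw [hW, hMeq] at hl
            simp only [List.length_cons] at hl
            omega
          have hC := ihM a' (s' ++ y ++ t) hMeq hlenM
          exact concl_transport (br_of_step ⟨s', t, x, y, hxy, rfl, rfl⟩) hC
        | nil =>
          simp only [List.nil_append] at hu hv
          rcases hxy with hxy | hxy
          · rcases hxy with ⟨i, hx, hy⟩ | ⟨i, j, hij, hx, hy⟩
            · -- x = [i+1,i,i+1] ↦ y = [i,i+1,i] ; Wd = (i+1)::i::(i+1)::t
              subst hx; subst hy
              rw [hW] at hu
              simp only [List.cons_append, List.nil_append, List.cons.injEq] at hu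
              obtain ⟨ha, hP⟩ := hu
              subst hP; rw [ha]
              have hMeq : M = i :: ((i+1) :: i :: t) := by simp [hv]
              have hlenM : ((i+1) :: i :: t).length + 1 ≤ L + 1 := by
                simp only [List.length_cons] at hlen ⊢; omega
              have hC := ihM i ((i+1) :: i :: t) hMeq hlenM
              have hlt : t.length + 2 ≤ L := by
                simp only [List.length_cons] at hlen; omega
              exact braidHead L ihL (Or.inr rfl) hlt hC
            · -- x = [i,j] ↦ y = [j,i], i+2 ≤ j ; Wd = i::j::t
              subst hx; subst hy
              rw [hW] at hu
              simp only [List.cons_append, List.nil_append, List.cons.injEq] at hu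
              obtain ⟨ha, hP⟩ := hu
              subst hP; rw [ha]
              have hMeq : M = j :: (i :: t) := by simp [hv]
              have hlenM : (i :: t).length + 1 ≤ L + 1 := by
                simp only [List.length_cons] at hlen ⊢; omega
              have hC := ihM j (i :: t) hMeq hlenM
              have hlt : t.length + 1 ≤ L := by
                simp only [List.length_cons] at hlen; omega
              exact commHead L ihL (Or.inl hij) hlt hC
          · rcases hxy with ⟨i, hy, hx⟩ | ⟨i, j, hij, hy, hx⟩
            · -- x = [i,i+1,i] ↦ y = [i+1,i,i+1] ; Wd = i::(i+1)::i::t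
              subst hx; subst hy
              rw [hW] at hu
              simp only [List.cons_append, List.nil_append, List.cons.injEq] at hu
              obtain ⟨ha, hP⟩ := hu
              subst hP; rw [ha]
              have hMeq : M = (i+1) :: (i :: (i+1) :: t) := by simp [hv]
              have hlenM : (i :: (i+1) :: t).length + 1 ≤ L + 1 := by
                simp only [List.length_cons] at hlen ⊢; omega
              have hC := ihM (i+1) (i :: (i+1) :: t) hMeq hlenM
              have hlt : t.length + 2 ≤ L := by
                simp only [List.length_cons] at hlen; omega
              exact braidHead L ihL (Or.inl rfl) hlt hC
            · -- x = [j,i] ↦ y = [i,j], i+2 ≤ j ; Wd = j::i::t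
              subst hx; subst hy
              rw [hW] at hu
              simp only [List.cons_append, List.nil_append, List.cons.injEq] at hu
              obtain ⟨ha, hP⟩ := hu
              subst hP; rw [ha]
              have hMeq : M = i :: (j :: t) := by simp [hv]
              have hlenM : (j :: t).length + 1 ≤ L + 1 := by
                simp only [List.length_cons] at hlen ⊢; omega
              have hC := ihM i (j :: t) hMeq hlenM
              have hlt : t.length + 1 ≤ L := by
                simp only [List.length_cons] at hlen; omega
              exact commHead L ihL (Or.inr hij) hlt hC
    intro a b P Q hlen hbr
    exact main b Q (a :: P) hbr a P rfl hlen

/-- The first-letter lemma, unrestricted length. -/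
theorem garside' {a b : ℕ+} {P Q : W} (h : br (a :: P) (b :: Q)) : Concl a b P Q :=
  garside (P.length + 1) a b P Q le_rfl h
/-- `br` on lists implies `braidCon` on the free monoid. -/
lemma braidCon_of_br : ∀ l1 l2 : W, br l1 l2 →
    braidCon (FreeMonoid.ofList l1) (FreeMonoid.ofList l2) := by
  intro l1 l2 h
  induction h with
  | refl => exact braidCon.refl _
  | tail _ hstep ih =>
    refine braidCon.trans ih ?_
    obtain ⟨s, t, x, y, hxy, rfl, rfl⟩ := hstep
    rw [FreeMonoid.ofList_append, FreeMonoid.ofList_append,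
        FreeMonoid.ofList_append, FreeMonoid.ofList_append]
    refine braidCon.mul (braidCon.mul (braidCon.refl _) ?_) (braidCon.refl _)
    have key : ∀ x y : W, LRel x y → braidCon (FreeMonoid.ofList x) (FreeMonoid.ofList y) := by
      rintro _ _ (⟨i, rfl, rfl⟩ | ⟨i, j, hij, rfl, rfl⟩)
      · exact ConGen.Rel.of _ _ (Or.inl ⟨i, rfl, rfl⟩)
      · exact ConGen.Rel.of _ _ (Or.inr ⟨i, j, hij, rfl, rfl⟩)
    rcases hxy with hxy | hxy
    · exact key _ _ hxy
    · exact braidCon.symm (key _ _ hxy)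

/-- The congruence whose relation is `br` of the underlying lists. -/
def brCon : Con (FreeMonoid ℕ+) where
  r := fun u v => br u.toList v.toList
  iseqv := ⟨fun _ => br_refl _, br_symm, br_trans⟩
  mul' := fun h1 h2 => br_append h1 h2

/-- `braidCon` implies `br`. -/
lemma br_of_braidCon {u v : FreeMonoid ℕ+} (h : braidCon u v) :
    br u.toList v.toList := by
  have hle : braidCon ≤ brCon := by
    apply Con.conGen_le.mpr
    rintro _ _ (⟨i, rfl, rfl⟩ | ⟨i, j, hij, rfl, rfl⟩)
    · refine br_of_step ⟨[], [], [i+1, i, i+1], [i, i+1, i], Or.inl (Or.inl ⟨i, rfl, rfl⟩), ?_, ?_⟩ <;> rfl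
    · refine br_of_step ⟨[], [], [i, j], [j, i], Or.inl (Or.inr ⟨i, j, hij, rfl, rfl⟩), ?_, ?_⟩ <;> rfl
  exact hle h

/-- Extraction: if `i` does not occur in `l` and `l ++ v` is equivalent to a word
starting with `i`, then `v` is equivalent to a word starting with `i`. -/
lemma extract (i : ℕ+) : ∀ l : W, i ∉ l → ∀ v w : W,
    br (l ++ v) (i :: w) → ∃ w', br v (i :: w') := by
  intro l
  induction l with
  | nil => intro _ v w h; exact ⟨w, h⟩
  | cons a l ihl =>
    intro hni v w h
    have ha : a ≠ i := by simp only [List.mem_cons] at hni; tauto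
    have hni' : i ∉ l := by simp only [List.mem_cons] at hni; tauto
    have hC : Concl a i (l ++ v) w := garside' h
    rcases hC with ⟨heq, _⟩ | ⟨_, Z, h1, _⟩ | ⟨_, Z, h1, _⟩
    · exact absurd heq ha
    · exact ihl hni' v Z h1
    · exact ihl hni' v (a :: Z) h1

end BraidAux

/-- Lemma 2.2 a): if `x_{n-1}` left-divides `βγ` and `x_{n-1}` does not divide
`β`, then `x_{n-1}` left-divides `γ`. -/
theorem left_dvd_of_left_dvd_mul (n : ℕ) (hn : 2 ≤ n) (β γ : MB)
    (h1 : GenDvdL (n - 1) (β * γ)) (h2 : ¬ GenDvd (n - 1) β) :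
    GenDvdL (n - 1) γ := by
  classical
  obtain ⟨ε, hε⟩ := h1
  set i : ℕ+ := ⟨max (n-1) 1, lt_of_lt_of_le one_pos (le_max_right (n-1) 1)⟩ with hidef
  have hXi : X (n-1) = braidCon.mk' (FreeMonoid.of i) := rfl
  obtain ⟨u, rfl⟩ := Con.mk'_surjective (c := braidCon) β
  obtain ⟨v, rfl⟩ := Con.mk'_surjective (c := braidCon) γ
  obtain ⟨w, rfl⟩ := Con.mk'_surjective (c := braidCon) ε
  have hcon : braidCon (u * v) (FreeMonoid.of i * w) := by
    apply braidCon.eq.mp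
    have : braidCon.mk' (u * v) = braidCon.mk' (FreeMonoid.of i * w) := by
      rw [map_mul, map_mul, ← hXi, hε]
    simpa only [← Con.coe_mk'] using this
  have hbr : BraidAux.br (u.toList ++ v.toList) (i :: w.toList) := by
    have h := BraidAux.br_of_braidCon hcon
    rwa [FreeMonoid.toList_mul, FreeMonoid.toList_mul, FreeMonoid.toList_of] at h
  have hni : i ∉ u.toList := by
    intro hmem
    apply h2
    obtain ⟨s, t, hst⟩ := List.append_of_mem hmem
    refine ⟨braidCon.mk' (FreeMonoid.ofList s), braidCon.mk' (FreeMonoid.ofList t), ?_⟩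
    have hu : u = FreeMonoid.ofList s * FreeMonoid.of i * FreeMonoid.ofList t := by
      conv_lhs => rw [← FreeMonoid.ofList_toList u]
      rw [hst, FreeMonoid.ofList_append, FreeMonoid.ofList_cons, mul_assoc]
    rw [hu, map_mul, map_mul, hXi]
  obtain ⟨w', hw'⟩ := BraidAux.extract i u.toList hni v.toList w.toList hbr
  have hcon2 : braidCon v (FreeMonoid.of i * FreeMonoid.ofList w') := by
    have h := BraidAux.braidCon_of_br v.toList (i :: w') hw'
    rwa [FreeMonoid.ofList_toList, FreeMonoid.ofList_cons] at h
  refine ⟨braidCon.mk' (FreeMonoid.ofList w'), ?_⟩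
  rw [hXi, ← map_mul]
  have := braidCon.eq.mpr hcon2
  simpa only [← Con.coe_mk'] using this
end
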